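/- Let A ∈ ℝ^{n×N}, τ, λ > 0 with τ‖A‖²_{2→2} ≤ 1, Y ∈ ℝ^{n×m}, L ≥ 2, and B_out > 0. Then for any orthogonal matrices Φ₁, Φ₂, Ψ₁, Ψ₂ ∈ O(N), ‖σ(Ψ₁ f_{Φ₁}^L(Y)) − σ(Ψ₂ f_{Φ₂}^L(Y))‖_F ≤ τ‖Y‖_F · (L·‖A‖_{2→2}·‖Ψ₁ − Ψ₂‖_{2→2} + L(L+3)·‖AΦ₁ − AΦ₂‖_{2→2}), where σ is applied columnwise. -/

import Mathlib

open MeasureTheory Matrix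
open scoped ENNReal

noncomputable def soft (mu x : ℝ) : ℝ := Real.sign x * max 0 (|x| - mu)

noncomputable def softMat {a b : ℕ} (mu : ℝ) (M : Matrix (Fin a) (Fin b) ℝ) :
    Matrix (Fin a) (Fin b) ℝ := Matrix.of fun i j => soft mu (M i j)

noncomputable def specNorm {a b : ℕ} (A : Matrix (Fin a) (Fin b) ℝ) : ℝ :=
  ‖LinearMap.toContinuousLinearMap (Matrix.toEuclideanLin A)‖

noncomputable def frobNorm {a b : ℕ} (A : Matrix (Fin a) (Fin b) ℝ) : ℝ :=
  Real.sqrt (∑ i, ∑ j, (A i j) ^ 2)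

noncomputable def l2 {N : ℕ} (x : Fin N → ℝ) : ℝ := Real.sqrt (∑ i, x i ^ 2)

noncomputable def sigma {N : ℕ} (B : ℝ) (x : Fin N → ℝ) : Fin N → ℝ :=
  if l2 x ≤ B then x else (B / l2 x) • x

noncomputable def sigmaMat {N m : ℕ} (B : ℝ) (M : Matrix (Fin N) (Fin m) ℝ) :
    Matrix (Fin N) (Fin m) ℝ := Matrix.of fun i j => sigma B (fun k => M k j) i

def IsOrthogonal {N : ℕ} (Φ : Matrix (Fin N) (Fin N) ℝ) : Prop := Φᵀ * Φ = 1

noncomputable def ista {n N m : ℕ} (A : Matrix (Fin n) (Fin N) ℝ) (τ lam : ℝ)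
    (Φ : Matrix (Fin N) (Fin N) ℝ) (Y : Matrix (Fin n) (Fin m) ℝ) :
    ℕ → Matrix (Fin N) (Fin m) ℝ
  | 0 => 0
  | l + 1 => softMat (τ * lam)
      ((1 - τ • (Φᵀ * Aᵀ * A * Φ)) * ista A τ lam Φ Y l + τ • ((A * Φ)ᵀ * Y))

noncomputable def istaVec {n N : ℕ} (A : Matrix (Fin n) (Fin N) ℝ) (τ lam : ℝ)
    (Φ : Matrix (Fin N) (Fin N) ℝ) (y : Fin n → ℝ) : ℕ → Fin N → ℝ
  | 0 => 0
  | l + 1 => soft (τ * lam) ∘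
      ((1 - τ • (Φᵀ * Aᵀ * A * Φ)) *ᵥ istaVec A τ lam Φ y l + τ • ((A * Φ)ᵀ *ᵥ y))

noncomputable def KL {n N m : ℕ} (A : Matrix (Fin n) (Fin N) ℝ) (τ : ℝ)
    (Y : Matrix (Fin n) (Fin m) ℝ) (L : ℕ) : ℝ :=
  τ * frobNorm Y * specNorm (1 - τ • (Aᵀ * A)) ^ (L - 1)
    + τ * frobNorm Y * ∑ l ∈ Finset.Icc 2 L,
        specNorm (1 - τ • (Aᵀ * A)) ^ (L - l) *
          (1 + 2 * τ * specNorm A ^ 2 *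
            ∑ k ∈ Finset.range (l - 1), specNorm (1 - τ • (Aᵀ * A)) ^ k)

noncomputable def ML {n N m : ℕ} (A : Matrix (Fin n) (Fin N) ℝ) (τ : ℝ)
    (Y : Matrix (Fin n) (Fin m) ℝ) (L : ℕ) : ℝ :=
  τ * specNorm A * frobNorm Y * ∑ k ∈ Finset.range L, specNorm (1 - τ • (Aᵀ * A)) ^ k

noncomputable def coveringNumber {α : Type*} (d : α → α → ℝ) (s : Set α) (ε : ℝ) : ℝ≥0∞ :=
  ⨅ (t : Finset α) (_ : ∀ x ∈ s, ∃ y ∈ t, d x y ≤ ε), (t.card : ℝ≥0∞)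

section AuxProof
open scoped Matrix.Norms.L2Operator

lemma specNorm_eq {a b : ℕ} (A : Matrix (Fin a) (Fin b) ℝ) : specNorm A = ‖A‖ := rfl

lemma l2_eq_norm {k : ℕ} (x : Fin k → ℝ) :
    l2 x = ‖(WithLp.equiv 2 (Fin k → ℝ)).symm x‖ := by
  rw [EuclideanSpace.norm_eq]
  simp [l2, Real.norm_eq_abs, sq_abs]

lemma mulVec_l2_le {a b : ℕ} (A : Matrix (Fin a) (Fin b) ℝ) (x : Fin b → ℝ) :
    l2 (A *ᵥ x) ≤ specNorm A * l2 x := by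
  rw [specNorm_eq, l2_eq_norm, l2_eq_norm]
  exact A.l2_opNorm_mulVec ((WithLp.equiv 2 (Fin b → ℝ)).symm x)

lemma specNorm_le_of {a b : ℕ} (A : Matrix (Fin a) (Fin b) ℝ) {c : ℝ} (hc : 0 ≤ c)
    (h : ∀ x : Fin b → ℝ, l2 (A *ᵥ x) ≤ c * l2 x) : specNorm A ≤ c := by
  rw [specNorm_eq, Matrix.l2_opNorm_def]
  apply ContinuousLinearMap.opNorm_le_bound _ hc
  intro x
  have := h ((WithLp.equiv 2 (Fin b → ℝ)) x)
  rw [l2_eq_norm, l2_eq_norm] at this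
  simpa [Matrix.toEuclideanLin_apply] using this

lemma specNorm_transpose {a b : ℕ} (A : Matrix (Fin a) (Fin b) ℝ) :
    specNorm Aᵀ = specNorm A := by
  have h : Aᴴ = Aᵀ := by ext i j; simp [conjTranspose_apply]
  rw [specNorm_eq, specNorm_eq, ← h, Matrix.l2_opNorm_conjTranspose]

lemma specNorm_mul_le {a b c : ℕ} (A : Matrix (Fin a) (Fin b) ℝ) (B : Matrix (Fin b) (Fin c) ℝ) :
    specNorm (A * B) ≤ specNorm A * specNorm B := by
  simp only [specNorm_eq]; exact Matrix.l2_opNorm_mul A B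

lemma specNorm_nonneg {a b : ℕ} (A : Matrix (Fin a) (Fin b) ℝ) : 0 ≤ specNorm A :=
  norm_nonneg _

lemma specNorm_add_le {a b : ℕ} (A B : Matrix (Fin a) (Fin b) ℝ) :
    specNorm (A + B) ≤ specNorm A + specNorm B := by
  simp only [specNorm_eq]; exact norm_add_le A B

lemma specNorm_neg {a b : ℕ} (A : Matrix (Fin a) (Fin b) ℝ) : specNorm (-A) = specNorm A := by
  simp only [specNorm_eq]; exact norm_neg A

lemma soft_eq {mu : ℝ} (hmu : 0 ≤ mu) (x : ℝ) :
    soft mu x = x - max (-mu) (min mu x) := by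
  rcases lt_trichotomy x 0 with hx | hx | hx
  · rw [soft, Real.sign_of_neg hx, abs_of_neg hx]
    rcases le_or_gt (-mu) x with h | h
    · have h1 : max 0 (-x - mu) = 0 := max_eq_left (by linarith)
      have h2 : min mu x = x := min_eq_right (by linarith)
      rw [h1, h2, max_eq_right h]; ring
    · have h1 : max 0 (-x - mu) = -x - mu := max_eq_right (by linarith)
      have h2 : min mu x = x := min_eq_right (by linarith)
      rw [h1, h2, max_eq_left h.le]; ring
  · subst hx
    rw [soft, Real.sign_zero, zero_mul, min_eq_right hmu,
      max_eq_right (by linarith : (-mu) ≤ (0:ℝ)), sub_zero]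
  · rw [soft, Real.sign_of_pos hx, abs_of_pos hx, one_mul]
    rcases le_or_gt x mu with h | h
    · have h2 : min mu x = x := min_eq_right h
      rw [max_eq_left (by linarith), h2, max_eq_right (by linarith)]; ring
    · have h2 : min mu x = mu := min_eq_left h.le
      rw [max_eq_right (by linarith), h2, max_eq_right (by linarith)]

lemma clamp_mono {mu : ℝ} : Monotone (fun t : ℝ => max (-mu) (min mu t)) :=
  fun a b hab => max_le_max le_rfl (min_le_min le_rfl hab)

lemma clamp_lip {mu x y : ℝ} (h : x ≤ y) :
    max (-mu) (min mu y) - max (-mu) (min mu x) ≤ y - x := by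
  rcases le_total mu x with h1 | h1 <;> rcases le_total mu y with h2 | h2 <;>
    rcases le_total x (-mu) with h3 | h3 <;> rcases le_total y (-mu) with h4 | h4 <;>
    simp [max_def, min_def] <;> split_ifs <;> linarith

lemma soft_lip {mu : ℝ} (hmu : 0 ≤ mu) (x y : ℝ) :
    |soft mu x - soft mu y| ≤ |x - y| := by
  rcases le_total x y with h | h
  · rw [soft_eq hmu, soft_eq hmu]
    have h1 := clamp_mono (mu := mu) h
    have h2 := clamp_lip (mu := mu) h
    simp only at h1
    have h3 : |x - y| = y - x := by rw [abs_sub_comm, abs_of_nonneg (by linarith)]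
    rw [h3, abs_le]
    constructor <;> linarith
  · rw [soft_eq hmu, soft_eq hmu]
    have h1 := clamp_mono (mu := mu) h
    have h2 := clamp_lip (mu := mu) h
    simp only at h1
    have h3 : |x - y| = x - y := abs_of_nonneg (by linarith)
    rw [h3, abs_le]
    constructor <;> linarith

lemma soft_abs_le {mu : ℝ} (hmu : 0 ≤ mu) (x : ℝ) : |soft mu x| ≤ |x| := by
  have := soft_lip hmu x 0
  simpa [soft] using this

-- l2 lemmas
lemma l2_nonneg {k : ℕ} (x : Fin k → ℝ) : 0 ≤ l2 x := Real.sqrt_nonneg _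

lemma l2_sq {k : ℕ} (x : Fin k → ℝ) : l2 x ^ 2 = ∑ i, x i ^ 2 :=
  Real.sq_sqrt (Finset.sum_nonneg fun i _ => sq_nonneg _)

lemma l2_mono {k : ℕ} {w z : Fin k → ℝ} (h : ∀ i, |w i| ≤ z i) : l2 w ≤ l2 z := by
  apply Real.sqrt_le_sqrt
  apply Finset.sum_le_sum
  intro i _
  calc w i ^ 2 = |w i| ^ 2 := (sq_abs _).symm
    _ ≤ z i ^ 2 := by
        have := abs_nonneg (w i)
        nlinarith [h i]

lemma dot_le_l2 {k : ℕ} (x y : Fin k → ℝ) : ∑ i, x i * y i ≤ l2 x * l2 y := by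
  have h := Finset.sum_mul_sq_le_sq_mul_sq Finset.univ x y
  have h2 : (∑ i, x i * y i) ^ 2 ≤ (l2 x * l2 y) ^ 2 := by
    rw [mul_pow, l2_sq, l2_sq]; exact h
  have h3 : 0 ≤ l2 x * l2 y := mul_nonneg (l2_nonneg x) (l2_nonneg y)
  nlinarith [h2, h3]

lemma l2_triangle {k : ℕ} (x y : Fin k → ℝ) :
    l2 (fun i => x i + y i) ≤ l2 x + l2 y := by
  have h1 : l2 (fun i => x i + y i) ^ 2 ≤ (l2 x + l2 y) ^ 2 := by
    rw [l2_sq]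
    have e : ∀ i : Fin k, (x i + y i) ^ 2 = x i ^ 2 + 2 * (x i * y i) + y i ^ 2 :=
      fun i => by ring
    have : ∑ i, (x i + y i) ^ 2 = (∑ i, x i ^ 2) + 2 * (∑ i, x i * y i) + ∑ i, y i ^ 2 := by
      rw [Finset.sum_congr rfl fun i _ => e i, Finset.sum_add_distrib,
        Finset.sum_add_distrib, ← Finset.mul_sum]
    rw [this]
    have := dot_le_l2 x y
    nlinarith [l2_sq x, l2_sq y]
  have h2 : 0 ≤ l2 x + l2 y := add_nonneg (l2_nonneg x) (l2_nonneg y)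
  nlinarith [l2_nonneg (fun i => x i + y i)]

lemma l2_smul {k : ℕ} (c : ℝ) (x : Fin k → ℝ) : l2 (fun i => c * x i) = |c| * l2 x := by
  simp only [l2, mul_pow, ← Finset.mul_sum]
  rw [Real.sqrt_mul (sq_nonneg c), Real.sqrt_sq_eq_abs]

lemma sum_sub_sq {k : ℕ} (u v : Fin k → ℝ) :
    ∑ i, (u i - v i) ^ 2 = (∑ i, u i ^ 2) - 2 * (∑ i, u i * v i) + ∑ i, v i ^ 2 := by
  have e : ∀ i : Fin k, (u i - v i) ^ 2 = u i ^ 2 - 2 * (u i * v i) + v i ^ 2 :=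
    fun i => by ring
  rw [Finset.sum_congr rfl fun i _ => e i, Finset.sum_add_distrib,
    Finset.sum_sub_distrib, ← Finset.mul_sum]

lemma sum_scaled {k : ℕ} (p q : ℝ) (x y : Fin k → ℝ) :
    ∑ i, (p * x i - q * y i) ^ 2
      = p ^ 2 * (∑ i, x i ^ 2) - 2 * (p * q * (∑ i, x i * y i)) + q ^ 2 * (∑ i, y i ^ 2) := by
  have e : ∀ i : Fin k, (p * x i - q * y i) ^ 2
      = p ^ 2 * x i ^ 2 - 2 * (p * (q * (x i * y i))) + q ^ 2 * y i ^ 2 := fun i => by ring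
  rw [Finset.sum_congr rfl fun i _ => e i, Finset.sum_add_distrib, Finset.sum_sub_distrib]
  simp only [← Finset.mul_sum]
  ring

lemma sigma_lip {k : ℕ} {B : ℝ} (hB : 0 < B) (x y : Fin k → ℝ) :
    l2 (fun i => sigma B x i - sigma B y i) ≤ l2 (fun i => x i - y i) := by
  set a := l2 x with ha
  set b := l2 y with hb
  have ha0 : 0 ≤ a := l2_nonneg x
  have hb0 : 0 ≤ b := l2_nonneg y
  have hc : ∑ i, x i * y i ≤ a * b := dot_le_l2 x y
  set c := ∑ i, x i * y i with hcdef
  have hax : ∑ i, x i ^ 2 = a ^ 2 := (l2_sq x).symm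
  have hby : ∑ i, y i ^ 2 = b ^ 2 := (l2_sq y).symm
  apply Real.sqrt_le_sqrt
  rw [sum_sub_sq x y, hax, hby, ← hcdef]
  unfold sigma
  rcases le_or_gt a B with h1 | h1 <;> rcases le_or_gt b B with h2 | h2
  · simp only [← ha, ← hb, if_pos h1, if_pos h2]
    rw [sum_sub_sq x y, hax, hby, ← hcdef]
  · -- x inside, y outside
    simp only [← ha, ← hb, if_pos h1, if_neg (not_le.mpr h2)]
    have hbne : b ≠ 0 := by linarith
    set q := B / b with hq
    have hqb : q * b = B := div_mul_cancel₀ B hbne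
    have hq0 : 0 ≤ q := div_nonneg hB.le hb0
    have hq1 : q ≤ 1 := by rw [hq, div_le_one (by linarith)]; linarith
    have hqb2 : q ^ 2 * b ^ 2 = B ^ 2 := by rw [← mul_pow, hqb]
    have key : ∑ i, (x i - (q • y) i) ^ 2 = a ^ 2 - 2 * (q * c) + q ^ 2 * b ^ 2 := by
      have h := sum_scaled 1 q x y
      simp only [one_mul, one_pow] at h
      simp only [Pi.smul_apply, smul_eq_mul]
      rw [h, hax, hby, ← hcdef]
    rw [key]
    nlinarith [mul_le_mul_of_nonneg_right hc (by linarith : (0:ℝ) ≤ 1 - q),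
      mul_le_mul_of_nonneg_right h1 (mul_nonneg hb0 (by linarith : (0:ℝ) ≤ 1 - q)),
      sq_nonneg (b - B), hqb, hqb2]
  · -- x outside, y inside
    simp only [← ha, ← hb, if_neg (not_le.mpr h1), if_pos h2]
    have hane : a ≠ 0 := by linarith
    set p := B / a with hp
    have hpa : p * a = B := div_mul_cancel₀ B hane
    have hp0 : 0 ≤ p := div_nonneg hB.le ha0
    have hp1 : p ≤ 1 := by rw [hp, div_le_one (by linarith)]; linarith
    have hpa2 : p ^ 2 * a ^ 2 = B ^ 2 := by rw [← mul_pow, hpa]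
    have key : ∑ i, ((p • x) i - y i) ^ 2 = p ^ 2 * a ^ 2 - 2 * (p * c) + b ^ 2 := by
      have h := sum_scaled p 1 x y
      simp only [one_mul, mul_one, one_pow] at h
      simp only [Pi.smul_apply, smul_eq_mul]
      rw [h, hax, hby, ← hcdef]
    rw [key]
    nlinarith [mul_le_mul_of_nonneg_right hc (by linarith : (0:ℝ) ≤ 1 - p),
      mul_le_mul_of_nonneg_right h2 (mul_nonneg ha0 (by linarith : (0:ℝ) ≤ 1 - p)),
      sq_nonneg (a - B), hpa, hpa2]
  · -- both outside
    simp only [← ha, ← hb, if_neg (not_le.mpr h1), if_neg (not_le.mpr h2)]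
    have hane : a ≠ 0 := by linarith
    have hbne : b ≠ 0 := by linarith
    set p := B / a with hp
    set q := B / b with hq
    have hpa : p * a = B := div_mul_cancel₀ B hane
    have hqb : q * b = B := div_mul_cancel₀ B hbne
    have hp0 : 0 ≤ p := div_nonneg hB.le ha0
    have hq0 : 0 ≤ q := div_nonneg hB.le hb0
    have hpa2 : p ^ 2 * a ^ 2 = B ^ 2 := by rw [← mul_pow, hpa]
    have hqb2 : q ^ 2 * b ^ 2 = B ^ 2 := by rw [← mul_pow, hqb]
    have habpq : p * q * (a * b) = B * B := by
      calc p * q * (a * b) = (p * a) * (q * b) := by ring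
        _ = B * B := by rw [hpa, hqb]
    have hBB : B * B ≤ a * b := by nlinarith
    have hpq1 : p * q ≤ 1 := by
      have hab : 0 < a * b := by nlinarith
      nlinarith
    have key : ∑ i, ((p • x) i - (q • y) i) ^ 2
        = p ^ 2 * a ^ 2 - 2 * (p * q * c) + q ^ 2 * b ^ 2 := by
      have h := sum_scaled p q x y
      simp only [Pi.smul_apply, smul_eq_mul]
      rw [h, hax, hby, ← hcdef]
    rw [key]
    nlinarith [mul_le_mul_of_nonneg_right hc (by linarith : (0:ℝ) ≤ 1 - p * q),
      habpq, sq_nonneg (a - b), hpa2, hqb2]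

lemma frobNorm_eq_l2 {a b : ℕ} (M : Matrix (Fin a) (Fin b) ℝ) :
    frobNorm M = l2 (fun j => l2 (fun i => M i j)) := by
  rw [frobNorm, l2, Finset.sum_comm]
  congr 1
  apply Finset.sum_congr rfl
  intro j _
  rw [l2_sq]

lemma frobNorm_nonneg {a b : ℕ} (M : Matrix (Fin a) (Fin b) ℝ) : 0 ≤ frobNorm M :=
  Real.sqrt_nonneg _

lemma frobNorm_entry_mono {a b : ℕ} {M N : Matrix (Fin a) (Fin b) ℝ}
    (h : ∀ i j, |M i j| ≤ |N i j|) : frobNorm M ≤ frobNorm N := by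
  apply Real.sqrt_le_sqrt
  apply Finset.sum_le_sum; intro i _
  apply Finset.sum_le_sum; intro j _
  rw [← sq_abs (M i j), ← sq_abs (N i j)]
  exact pow_le_pow_left₀ (abs_nonneg _) (h i j) 2

lemma frobNorm_add_le {a b : ℕ} (M N : Matrix (Fin a) (Fin b) ℝ) :
    frobNorm (M + N) ≤ frobNorm M + frobNorm N := by
  rw [frobNorm_eq_l2, frobNorm_eq_l2, frobNorm_eq_l2]
  calc l2 (fun j => l2 (fun i => (M + N) i j))
      ≤ l2 (fun j => l2 (fun i => M i j) + l2 (fun i => N i j)) := by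
        apply l2_mono
        intro j
        rw [abs_of_nonneg (l2_nonneg _)]
        have : (fun i => (M + N) i j) = fun i => M i j + N i j := by
          ext i; simp [Matrix.add_apply]
        rw [this]
        exact l2_triangle _ _
    _ ≤ _ := l2_triangle _ _

lemma frobNorm_smul {a b : ℕ} (c : ℝ) (M : Matrix (Fin a) (Fin b) ℝ) :
    frobNorm (c • M) = |c| * frobNorm M := by
  rw [frobNorm_eq_l2, frobNorm_eq_l2]
  have : ∀ j, l2 (fun i => (c • M) i j) = |c| * l2 (fun i => M i j) := by
    intro j
    have : (fun i => (c • M) i j) = fun i => c * M i j := by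
      ext i; simp [Matrix.smul_apply]
    rw [this, l2_smul]
  simp_rw [this]
  rw [l2_smul, abs_abs]

lemma frobNorm_mul_le {a b c : ℕ} (P : Matrix (Fin a) (Fin b) ℝ)
    (M : Matrix (Fin b) (Fin c) ℝ) :
    frobNorm (P * M) ≤ specNorm P * frobNorm M := by
  rw [frobNorm_eq_l2, frobNorm_eq_l2]
  calc l2 (fun j => l2 (fun i => (P * M) i j))
      ≤ l2 (fun j => specNorm P * l2 (fun i => M i j)) := by
        apply l2_mono
        intro j
        rw [abs_of_nonneg (l2_nonneg _)]
        have hcol : (fun i => (P * M) i j) = P *ᵥ (fun i => M i j) := by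
          ext i; simp [Matrix.mul_apply, Matrix.mulVec, dotProduct]
        rw [hcol]
        exact mulVec_l2_le P _
    _ = specNorm P * l2 (fun j => l2 (fun i => M i j)) := by
        rw [l2_smul, abs_of_nonneg (specNorm_nonneg P)]


lemma dot_mulVec {a b : ℕ} (M : Matrix (Fin a) (Fin b) ℝ) (x : Fin a → ℝ) (y : Fin b → ℝ) :
    ∑ i, x i * (M *ᵥ y) i = ∑ j, (Mᵀ *ᵥ x) j * y j := by
  simp only [Matrix.mulVec, dotProduct, Matrix.transpose_apply, Finset.mul_sum,
    Finset.sum_mul]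
  rw [Finset.sum_comm]
  exact Finset.sum_congr rfl fun j _ => Finset.sum_congr rfl fun i _ => by ring

lemma l2_orth {N : ℕ} {Φ : Matrix (Fin N) (Fin N) ℝ} (hΦ : IsOrthogonal Φ)
    (x : Fin N → ℝ) : l2 (Φ *ᵥ x) = l2 x := by
  unfold l2
  congr 1
  calc ∑ i, (Φ *ᵥ x) i ^ 2 = ∑ i, (Φ *ᵥ x) i * (Φ *ᵥ x) i := by
        exact Finset.sum_congr rfl fun i _ => sq ((Φ *ᵥ x) i)
    _ = ∑ j, (Φᵀ *ᵥ (Φ *ᵥ x)) j * x j := dot_mulVec Φ (Φ *ᵥ x) x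
    _ = ∑ j, x j ^ 2 := by
        rw [Matrix.mulVec_mulVec, hΦ, Matrix.one_mulVec]
        exact Finset.sum_congr rfl fun j _ => (sq (x j)).symm

lemma specNorm_orth_le {N : ℕ} {Φ : Matrix (Fin N) (Fin N) ℝ} (hΦ : IsOrthogonal Φ) :
    specNorm Φ ≤ 1 :=
  specNorm_le_of Φ zero_le_one fun x => by rw [l2_orth hΦ, one_mul]

lemma IsOrthogonal.transpose {N : ℕ} {Φ : Matrix (Fin N) (Fin N) ℝ} (hΦ : IsOrthogonal Φ) :
    IsOrthogonal Φᵀ := by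
  unfold IsOrthogonal at *
  rw [Matrix.transpose_transpose]
  exact mul_eq_one_comm.mp hΦ

lemma specNorm_T_le {n N : ℕ} (A : Matrix (Fin n) (Fin N) ℝ) {τ : ℝ} (hτ : 0 < τ)
    (hA : τ * specNorm A ^ 2 ≤ 1) : specNorm (1 - τ • (Aᵀ * A)) ≤ 1 := by
  apply specNorm_le_of _ zero_le_one
  intro x
  rw [one_mul]
  have hmv : (1 - τ • (Aᵀ * A)) *ᵥ x = fun i => 1 * x i - τ * (Aᵀ *ᵥ (A *ᵥ x)) i := by
    ext i
    rw [Matrix.sub_mulVec, Matrix.smul_mulVec, Matrix.one_mulVec, Matrix.mulVec_mulVec]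
    simp [Pi.smul_apply]
  rw [hmv]
  set u := A *ᵥ x with hu
  set v := Aᵀ *ᵥ u with hv
  have hxv : ∑ i, x i * v i = ∑ j, u j ^ 2 := by
    rw [hv, dot_mulVec Aᵀ x u, Matrix.transpose_transpose]
    rw [hu]
    exact Finset.sum_congr rfl fun j _ => (sq _).symm
  have hvsq : ∑ i, v i ^ 2 ≤ specNorm A ^ 2 * ∑ j, u j ^ 2 := by
    have h1 : l2 v ≤ specNorm A * l2 u := by
      rw [hv, ← specNorm_transpose A]
      exact mulVec_l2_le Aᵀ u
    have h2 := l2_nonneg v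
    have h3 := l2_nonneg u
    have := l2_sq v
    have := l2_sq u
    nlinarith [specNorm_nonneg A]
  unfold l2
  apply Real.sqrt_le_sqrt
  rw [sum_scaled 1 τ x v, hxv]
  have husq : 0 ≤ ∑ j, u j ^ 2 := Finset.sum_nonneg fun j _ => sq_nonneg _
  nlinarith [mul_le_mul_of_nonneg_left hvsq (sq_nonneg τ),
    mul_le_mul_of_nonneg_right hA (mul_nonneg hτ.le husq)]

lemma frob_softMat_sub {a b : ℕ} {mu : ℝ} (hmu : 0 ≤ mu) (M N : Matrix (Fin a) (Fin b) ℝ) :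
    frobNorm (softMat mu M - softMat mu N) ≤ frobNorm (M - N) := by
  apply frobNorm_entry_mono
  intro i j
  simp only [Matrix.sub_apply, softMat, Matrix.of_apply]
  exact soft_lip hmu _ _

lemma frob_softMat_le {a b : ℕ} {mu : ℝ} (hmu : 0 ≤ mu) (M : Matrix (Fin a) (Fin b) ℝ) :
    frobNorm (softMat mu M) ≤ frobNorm M := by
  apply frobNorm_entry_mono
  intro i j
  exact soft_abs_le hmu _

lemma frob_sigmaMat_sub {N m : ℕ} {B : ℝ} (hB : 0 < B) (M N' : Matrix (Fin N) (Fin m) ℝ) :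
    frobNorm (sigmaMat B M - sigmaMat B N') ≤ frobNorm (M - N') := by
  rw [frobNorm_eq_l2, frobNorm_eq_l2]
  apply l2_mono
  intro j
  rw [abs_of_nonneg (l2_nonneg _)]
  have h1 : (fun i => (sigmaMat B M - sigmaMat B N') i j)
      = fun i => sigma B (fun k => M k j) i - sigma B (fun k => N' k j) i := by
    ext i; simp [sigmaMat, Matrix.sub_apply]
  have h2 : (fun i => (M - N') i j) = fun i => M i j - N' i j := by
    ext i; simp [Matrix.sub_apply]
  rw [h1, h2]
  exact sigma_lip hB _ _

lemma Tconj {n N : ℕ} (A : Matrix (Fin n) (Fin N) ℝ) (τ : ℝ)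
    {Φ : Matrix (Fin N) (Fin N) ℝ} (hΦ : IsOrthogonal Φ) :
    (1 : Matrix (Fin N) (Fin N) ℝ) - τ • (Φᵀ * Aᵀ * A * Φ)
      = Φᵀ * (1 - τ • (Aᵀ * A)) * Φ := by
  rw [Matrix.mul_sub, Matrix.sub_mul, Matrix.mul_one, Matrix.mul_smul, Matrix.smul_mul, hΦ]
  congr 2
  simp only [Matrix.mul_assoc]

lemma specNorm_TPhi_le {n N : ℕ} (A : Matrix (Fin n) (Fin N) ℝ) {τ : ℝ} (hτ : 0 < τ)
    (hA : τ * specNorm A ^ 2 ≤ 1) {Φ : Matrix (Fin N) (Fin N) ℝ} (hΦ : IsOrthogonal Φ) :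
    specNorm (1 - τ • (Φᵀ * Aᵀ * A * Φ)) ≤ 1 := by
  rw [Tconj A τ hΦ]
  set T := (1 : Matrix (Fin N) (Fin N) ℝ) - τ • (Aᵀ * A)
  have h1 : specNorm (Φᵀ * T * Φ) ≤ specNorm (Φᵀ * T) * specNorm Φ := specNorm_mul_le _ _
  have h2 : specNorm (Φᵀ * T) ≤ specNorm Φᵀ * specNorm T := specNorm_mul_le _ _
  have h3 := specNorm_orth_le hΦ
  have h4 := specNorm_orth_le hΦ.transpose
  have h5 := specNorm_T_le A hτ hA
  have n1 := specNorm_nonneg (Φᵀ * T)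
  have n2 := specNorm_nonneg Φ
  have n3 := specNorm_nonneg Φᵀ
  have n4 := specNorm_nonneg T
  nlinarith

lemma specNorm_APhi_le {n N : ℕ} (A : Matrix (Fin n) (Fin N) ℝ)
    {Φ : Matrix (Fin N) (Fin N) ℝ} (hΦ : IsOrthogonal Φ) :
    specNorm (A * Φ) ≤ specNorm A := by
  have h1 := specNorm_mul_le A Φ
  have h2 := specNorm_orth_le hΦ
  nlinarith [specNorm_nonneg A, specNorm_nonneg Φ]

lemma ista_growth {n N m : ℕ} (A : Matrix (Fin n) (Fin N) ℝ) {τ lam : ℝ}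
    (hτ : 0 < τ) (hlam : 0 < lam) (hA : τ * specNorm A ^ 2 ≤ 1)
    {Φ : Matrix (Fin N) (Fin N) ℝ} (hΦ : IsOrthogonal Φ)
    (Y : Matrix (Fin n) (Fin m) ℝ) :
    ∀ l : ℕ, frobNorm (ista A τ lam Φ Y l) ≤ (l : ℝ) * (τ * specNorm A * frobNorm Y) := by
  intro l
  induction l with
  | zero => simp [ista, frobNorm]
  | succ l ih =>
    have hmu : (0:ℝ) ≤ τ * lam := by positivity
    rw [show ista A τ lam Φ Y (l+1) = softMat (τ * lam)
        ((1 - τ • (Φᵀ * Aᵀ * A * Φ)) * ista A τ lam Φ Y l + τ • ((A * Φ)ᵀ * Y)) from rfl]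
    set X := ista A τ lam Φ Y l
    set T := (1 : Matrix (Fin N) (Fin N) ℝ) - τ • (Φᵀ * Aᵀ * A * Φ)
    calc frobNorm (softMat (τ * lam) (T * X + τ • ((A * Φ)ᵀ * Y)))
        ≤ frobNorm (T * X + τ • ((A * Φ)ᵀ * Y)) := frob_softMat_le hmu _
      _ ≤ frobNorm (T * X) + frobNorm (τ • ((A * Φ)ᵀ * Y)) := frobNorm_add_le _ _
      _ ≤ (l : ℝ) * (τ * specNorm A * frobNorm Y) + τ * (specNorm A * frobNorm Y) := by
          have h1 : frobNorm (T * X) ≤ specNorm T * frobNorm X := frobNorm_mul_le _ _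
          have h2 : specNorm T ≤ 1 := specNorm_TPhi_le A hτ hA hΦ
          have h3 : frobNorm (τ • ((A * Φ)ᵀ * Y)) = τ * frobNorm ((A * Φ)ᵀ * Y) := by
            rw [frobNorm_smul, abs_of_pos hτ]
          have h4 : frobNorm ((A * Φ)ᵀ * Y) ≤ specNorm (A * Φ)ᵀ * frobNorm Y :=
            frobNorm_mul_le _ _
          have h5 : specNorm (A * Φ)ᵀ = specNorm (A * Φ) := specNorm_transpose _
          have h6 : specNorm (A * Φ) ≤ specNorm A := specNorm_APhi_le A hΦ
          have n1 := frobNorm_nonneg X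
          have n2 := frobNorm_nonneg Y
          have n3 := specNorm_nonneg T
          have n4 := specNorm_nonneg A
          have n5 := frobNorm_nonneg (T * X)
          have k1 : frobNorm (T * X) ≤ frobNorm X :=
            h1.trans (by nlinarith)
          have k2 : frobNorm ((A * Φ)ᵀ * Y) ≤ specNorm A * frobNorm Y :=
            h4.trans (by rw [h5]; exact mul_le_mul_of_nonneg_right h6 n2)
          have k3 := mul_le_mul_of_nonneg_left k2 hτ.le
          linarith
      _ = ((l : ℝ) + 1) * (τ * specNorm A * frobNorm Y) := by ring
      _ = ((l + 1 : ℕ) : ℝ) * (τ * specNorm A * frobNorm Y) := by push_cast; ring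

lemma ista_diff {n N m : ℕ} (A : Matrix (Fin n) (Fin N) ℝ) {τ lam : ℝ}
    (hτ : 0 < τ) (hlam : 0 < lam) (hA : τ * specNorm A ^ 2 ≤ 1)
    {Φ₁ Φ₂ : Matrix (Fin N) (Fin N) ℝ} (hΦ₁ : IsOrthogonal Φ₁) (hΦ₂ : IsOrthogonal Φ₂)
    (Y : Matrix (Fin n) (Fin m) ℝ) :
    ∀ l : ℕ, frobNorm (ista A τ lam Φ₁ Y l - ista A τ lam Φ₂ Y l)
      ≤ (l : ℝ) ^ 2 * (τ * frobNorm Y * specNorm (A * Φ₁ - A * Φ₂)) := by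
  intro l
  induction l with
  | zero => simp [ista, frobNorm]
  | succ l ih =>
    have hmu : (0:ℝ) ≤ τ * lam := by positivity
    set X₁ := ista A τ lam Φ₁ Y l with hX₁
    set X₂ := ista A τ lam Φ₂ Y l with hX₂
    set C₁ := A * Φ₁ with hC₁
    set C₂ := A * Φ₂ with hC₂
    set D := specNorm (C₁ - C₂) with hD
    have hCid : ∀ (Φ : Matrix (Fin N) (Fin N) ℝ), Φᵀ * Aᵀ * A * Φ = (A * Φ)ᵀ * (A * Φ) := by
      intro Φ; rw [Matrix.transpose_mul]; simp only [Matrix.mul_assoc]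
    have e1 : ista A τ lam Φ₁ Y (l+1) = softMat (τ * lam)
        ((1 - τ • (C₁ᵀ * C₁)) * X₁ + τ • (C₁ᵀ * Y)) := by
      rw [show ista A τ lam Φ₁ Y (l+1) = softMat (τ * lam)
        ((1 - τ • (Φ₁ᵀ * Aᵀ * A * Φ₁)) * ista A τ lam Φ₁ Y l + τ • ((A * Φ₁)ᵀ * Y)) from rfl,
        hCid Φ₁]
    have e2 : ista A τ lam Φ₂ Y (l+1) = softMat (τ * lam)
        ((1 - τ • (C₂ᵀ * C₂)) * X₂ + τ • (C₂ᵀ * Y)) := by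
      rw [show ista A τ lam Φ₂ Y (l+1) = softMat (τ * lam)
        ((1 - τ • (Φ₂ᵀ * Aᵀ * A * Φ₂)) * ista A τ lam Φ₂ Y l + τ • ((A * Φ₂)ᵀ * Y)) from rfl,
        hCid Φ₂]
    rw [e1, e2]
    set G := C₂ᵀ * C₂ - C₁ᵀ * C₁ with hG
    have hWid : ((1 - τ • (C₁ᵀ * C₁)) * X₁ + τ • (C₁ᵀ * Y))
        - ((1 - τ • (C₂ᵀ * C₂)) * X₂ + τ • (C₂ᵀ * Y))
        = (1 - τ • (C₁ᵀ * C₁)) * (X₁ - X₂) + (τ • G) * X₂ + τ • ((C₁ - C₂)ᵀ * Y) := by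
      simp only [hG, Matrix.sub_mul, Matrix.mul_sub, Matrix.one_mul, Matrix.smul_mul,
        Matrix.transpose_sub, smul_sub]
      abel
    have hGid : G = (C₂ - C₁)ᵀ * C₂ + C₁ᵀ * (C₂ - C₁) := by
      simp only [hG, Matrix.transpose_sub, Matrix.sub_mul, Matrix.mul_sub]
      abel
    have hspecG : specNorm G ≤ 2 * specNorm A * D := by
      rw [hGid]
      have t1 : specNorm ((C₂ - C₁)ᵀ * C₂) ≤ specNorm (C₂ - C₁)ᵀ * specNorm C₂ :=
        specNorm_mul_le _ _
      have t2 : specNorm (C₁ᵀ * (C₂ - C₁)) ≤ specNorm C₁ᵀ * specNorm (C₂ - C₁) :=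
        specNorm_mul_le _ _
      have t3 : specNorm (C₂ - C₁) = D := by
        rw [show C₂ - C₁ = -(C₁ - C₂) from (neg_sub C₁ C₂).symm, specNorm_neg, hD]
      have t4 : specNorm (C₂ - C₁)ᵀ = D := by rw [specNorm_transpose, t3]
      have t5 : specNorm C₂ ≤ specNorm A := specNorm_APhi_le A hΦ₂
      have t6 : specNorm C₁ᵀ ≤ specNorm A := by
        rw [specNorm_transpose]; exact specNorm_APhi_le A hΦ₁
      have hD0 : 0 ≤ D := specNorm_nonneg _
      have := specNorm_add_le ((C₂ - C₁)ᵀ * C₂) (C₁ᵀ * (C₂ - C₁))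
      nlinarith [specNorm_nonneg ((C₂ - C₁)ᵀ * C₂), specNorm_nonneg (C₁ᵀ * (C₂ - C₁)),
        specNorm_nonneg C₂, specNorm_nonneg C₁ᵀ, specNorm_nonneg A]
    have hT1 : specNorm (1 - τ • (C₁ᵀ * C₁)) ≤ 1 := by
      rw [hC₁, ← hCid Φ₁]; exact specNorm_TPhi_le A hτ hA hΦ₁
    have hD0 : 0 ≤ D := specNorm_nonneg _
    have hY0 : 0 ≤ frobNorm Y := frobNorm_nonneg Y
    have hA0 : 0 ≤ specNorm A := specNorm_nonneg A
    have hX₂b : frobNorm X₂ ≤ (l : ℝ) * (τ * specNorm A * frobNorm Y) :=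
      ista_growth A hτ hlam hA hΦ₂ Y l
    calc frobNorm (softMat (τ * lam) ((1 - τ • (C₁ᵀ * C₁)) * X₁ + τ • (C₁ᵀ * Y))
          - softMat (τ * lam) ((1 - τ • (C₂ᵀ * C₂)) * X₂ + τ • (C₂ᵀ * Y)))
        ≤ frobNorm (((1 - τ • (C₁ᵀ * C₁)) * X₁ + τ • (C₁ᵀ * Y))
          - ((1 - τ • (C₂ᵀ * C₂)) * X₂ + τ • (C₂ᵀ * Y))) := frob_softMat_sub hmu _ _
      _ = frobNorm ((1 - τ • (C₁ᵀ * C₁)) * (X₁ - X₂) + (τ • G) * X₂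
          + τ • ((C₁ - C₂)ᵀ * Y)) := by rw [hWid]
      _ ≤ frobNorm ((1 - τ • (C₁ᵀ * C₁)) * (X₁ - X₂) + (τ • G) * X₂)
          + frobNorm (τ • ((C₁ - C₂)ᵀ * Y)) := frobNorm_add_le _ _
      _ ≤ frobNorm ((1 - τ • (C₁ᵀ * C₁)) * (X₁ - X₂)) + frobNorm ((τ • G) * X₂)
          + frobNorm (τ • ((C₁ - C₂)ᵀ * Y)) := by
            have := frobNorm_add_le ((1 - τ • (C₁ᵀ * C₁)) * (X₁ - X₂)) ((τ • G) * X₂)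
            linarith
      _ ≤ (l : ℝ) ^ 2 * (τ * frobNorm Y * D) + 2 * (l : ℝ) * (τ * frobNorm Y * D)
          + τ * frobNorm Y * D := by
            have b1 : frobNorm ((1 - τ • (C₁ᵀ * C₁)) * (X₁ - X₂))
                ≤ (l : ℝ) ^ 2 * (τ * frobNorm Y * D) := by
              have hm := frobNorm_mul_le (1 - τ • (C₁ᵀ * C₁)) (X₁ - X₂)
              have hd0 := frobNorm_nonneg (X₁ - X₂)
              have h2 := mul_le_mul_of_nonneg_right hT1 hd0
              rw [one_mul] at h2
              linarith [ih]
            have b2 : frobNorm ((τ • G) * X₂) ≤ 2 * (l : ℝ) * (τ * frobNorm Y * D) := by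
              rw [Matrix.smul_mul, frobNorm_smul, abs_of_pos hτ]
              have h1 : frobNorm (G * X₂) ≤ specNorm G * frobNorm X₂ := frobNorm_mul_le _ _
              have hX0 := frobNorm_nonneg X₂
              have hl0 : (0:ℝ) ≤ (l : ℝ) := Nat.cast_nonneg l
              have hG0 := specNorm_nonneg G
              have key : specNorm G * frobNorm X₂
                  ≤ (2 * specNorm A * D) * ((l : ℝ) * (τ * specNorm A * frobNorm Y)) := by
                apply mul_le_mul hspecG hX₂b hX0
                positivity
              have expand : (2 * specNorm A * D) * ((l : ℝ) * (τ * specNorm A * frobNorm Y))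
                  = 2 * (l : ℝ) * ((τ * specNorm A ^ 2) * (frobNorm Y * D)) := by ring
              have le1 : (τ * specNorm A ^ 2) * (frobNorm Y * D) ≤ 1 * (frobNorm Y * D) :=
                mul_le_mul_of_nonneg_right hA (by positivity)
              calc τ * frobNorm (G * X₂) ≤ τ * (specNorm G * frobNorm X₂) := by
                    exact mul_le_mul_of_nonneg_left h1 hτ.le
                _ ≤ τ * (2 * (l : ℝ) * ((τ * specNorm A ^ 2) * (frobNorm Y * D))) := by
                    rw [← expand]
                    exact mul_le_mul_of_nonneg_left key hτ.le
                _ ≤ τ * (2 * (l : ℝ) * (1 * (frobNorm Y * D))) := by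
                    apply mul_le_mul_of_nonneg_left _ hτ.le
                    apply mul_le_mul_of_nonneg_left le1 (by positivity)
                _ = 2 * (l : ℝ) * (τ * frobNorm Y * D) := by ring
            have b3 : frobNorm (τ • ((C₁ - C₂)ᵀ * Y)) ≤ τ * frobNorm Y * D := by
              rw [frobNorm_smul, abs_of_pos hτ]
              have h1 : frobNorm ((C₁ - C₂)ᵀ * Y) ≤ specNorm (C₁ - C₂)ᵀ * frobNorm Y :=
                frobNorm_mul_le _ _
              rw [specNorm_transpose] at h1
              calc τ * frobNorm ((C₁ - C₂)ᵀ * Y) ≤ τ * (D * frobNorm Y) :=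
                    mul_le_mul_of_nonneg_left h1 hτ.le
                _ = τ * frobNorm Y * D := by ring
            linarith
      _ ≤ ((l + 1 : ℕ) : ℝ) ^ 2 * (τ * frobNorm Y * D) := by
            push_cast
            exact le_of_eq (by ring)


end AuxProof

theorem statement9 {n N m : ℕ} (A : Matrix (Fin n) (Fin N) ℝ)
    (τ lam : ℝ) (hτ : 0 < τ) (hlam : 0 < lam) (hA : τ * specNorm A ^ 2 ≤ 1)
    (Y : Matrix (Fin n) (Fin m) ℝ) (L : ℕ) (hL : 2 ≤ L) (Bout : ℝ) (hBout : 0 < Bout)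
    (Φ₁ Φ₂ Ψ₁ Ψ₂ : Matrix (Fin N) (Fin N) ℝ)
    (hΦ₁ : IsOrthogonal Φ₁) (hΦ₂ : IsOrthogonal Φ₂)
    (hΨ₁ : IsOrthogonal Ψ₁) (hΨ₂ : IsOrthogonal Ψ₂) :
    frobNorm (sigmaMat Bout (Ψ₁ * ista A τ lam Φ₁ Y L) -
              sigmaMat Bout (Ψ₂ * ista A τ lam Φ₂ Y L)) ≤
      τ * frobNorm Y * ((L : ℝ) * specNorm A * specNorm (Ψ₁ - Ψ₂) +
        (L : ℝ) * ((L : ℝ) + 3) * specNorm (A * Φ₁ - A * Φ₂)) := by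
  set X₁ := ista A τ lam Φ₁ Y L with hX₁
  set X₂ := ista A τ lam Φ₂ Y L with hX₂
  set D := specNorm (A * Φ₁ - A * Φ₂) with hD
  set P := specNorm (Ψ₁ - Ψ₂) with hP
  have hD0 : 0 ≤ D := specNorm_nonneg _
  have hP0 : 0 ≤ P := specNorm_nonneg _
  have hY0 : 0 ≤ frobNorm Y := frobNorm_nonneg Y
  have hA0 : 0 ≤ specNorm A := specNorm_nonneg A
  have hL0 : (0:ℝ) ≤ (L:ℝ) := Nat.cast_nonneg L
  have hid : Ψ₁ * X₁ - Ψ₂ * X₂ = (Ψ₁ - Ψ₂) * X₁ + Ψ₂ * (X₁ - X₂) := by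
    simp only [Matrix.sub_mul, Matrix.mul_sub]
    abel
  have hgrow : frobNorm X₁ ≤ (L : ℝ) * (τ * specNorm A * frobNorm Y) :=
    ista_growth A hτ hlam hA hΦ₁ Y L
  have hdiff : frobNorm (X₁ - X₂) ≤ (L : ℝ) ^ 2 * (τ * frobNorm Y * D) :=
    ista_diff A hτ hlam hA hΦ₁ hΦ₂ Y L
  have t1 : frobNorm ((Ψ₁ - Ψ₂) * X₁) ≤ P * ((L : ℝ) * (τ * specNorm A * frobNorm Y)) := by
    have h1 := frobNorm_mul_le (Ψ₁ - Ψ₂) X₁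
    have h2 := mul_le_mul_of_nonneg_left hgrow hP0
    linarith
  have t2 : frobNorm (Ψ₂ * (X₁ - X₂)) ≤ (L : ℝ) ^ 2 * (τ * frobNorm Y * D) := by
    have h1 := frobNorm_mul_le Ψ₂ (X₁ - X₂)
    have h2 := specNorm_orth_le hΨ₂
    have h3 := frobNorm_nonneg (X₁ - X₂)
    have h4 := mul_le_mul_of_nonneg_right h2 h3
    rw [one_mul] at h4
    linarith
  have h3L : (0:ℝ) ≤ 3 * (L:ℝ) * (τ * frobNorm Y * D) := by positivity
  calc frobNorm (sigmaMat Bout (Ψ₁ * X₁) - sigmaMat Bout (Ψ₂ * X₂))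
      ≤ frobNorm (Ψ₁ * X₁ - Ψ₂ * X₂) := frob_sigmaMat_sub hBout _ _
    _ = frobNorm ((Ψ₁ - Ψ₂) * X₁ + Ψ₂ * (X₁ - X₂)) := by rw [hid]
    _ ≤ frobNorm ((Ψ₁ - Ψ₂) * X₁) + frobNorm (Ψ₂ * (X₁ - X₂)) := frobNorm_add_le _ _
    _ ≤ P * ((L : ℝ) * (τ * specNorm A * frobNorm Y))
        + (L : ℝ) ^ 2 * (τ * frobNorm Y * D) := by linarith
    _ ≤ τ * frobNorm Y * ((L : ℝ) * specNorm A * P + (L : ℝ) * ((L : ℝ) + 3) * D) := by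
        have expand : τ * frobNorm Y * ((L : ℝ) * specNorm A * P + (L : ℝ) * ((L : ℝ) + 3) * D)
            = P * ((L : ℝ) * (τ * specNorm A * frobNorm Y))
              + (L : ℝ) ^ 2 * (τ * frobNorm Y * D) + 3 * (L:ℝ) * (τ * frobNorm Y * D) := by
          ring
        linarith
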